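/- Let X be a real Banach space with a semi-normalized Markushevich basis (e_i, e*_i) which is a Schauder basis with basis constant K, let t ∈ (0,1], and let n = (n_k) be a strictly increasing sequence of positive integers. Suppose the basis is C-n-t-quasi-greedy. Then for every k ∈ ℕ, every integer l ≥ 2, every x ∈ X, and every t-greedy set A for x with n_k ≤ |A| < l·n_k, one has ‖P_A(x)‖ ≤ 2·C·K·(l − 1 + K)·‖x‖. -/

import Mathlib

open Finset

/-- Coordinate projection `P_A x = ∑_{i ∈ A} e*_i(x) • e_i`. -/
noncomputable def proj {X : Type*} [NormedAddCommGroup X] [NormedSpace ℝ X]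
    (e : ℕ → X) (f : ℕ → X →L[ℝ] ℝ) (A : Finset ℕ) (x : X) : X :=
  ∑ i ∈ A, f i x • e i

/-- `A` is a `t`-greedy set for `x`:
`min_{i ∈ A} |e*_i(x)| ≥ t · sup_{j ∉ A} |e*_j(x)|`. -/
def IsGreedySet {X : Type*} [NormedAddCommGroup X] [NormedSpace ℝ X]
    (f : ℕ → X →L[ℝ] ℝ) (t : ℝ) (x : X) (A : Finset ℕ) : Prop :=
  ∀ i ∈ A, ∀ j ∉ A, t * |f j x| ≤ |f i x|

section Aux

variable {X : Type*} [NormedAddCommGroup X] [NormedSpace ℝ X]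

/-- The counting function `c ↦ |A ∩ [0,c)|` attains every value `j ≤ |A|`. -/
lemma count_exists (A : Finset ℕ) : ∀ j, j ≤ A.card → ∃ c, (A.filter (· < c)).card = j := by
  intro j
  induction j with
  | zero => exact fun _ => ⟨0, by simp⟩
  | succ j ih =>
    intro hj
    obtain ⟨c, hc⟩ := ih (Nat.le_of_succ_le hj)
    have hS : (A.filter (fun i => ¬ i < c)).Nonempty := by
      rw [← Finset.card_pos]
      have h := Finset.card_filter_add_card_filter_not (s := A) (p := (· < c))
      omega
    set d := (A.filter (fun i => ¬ i < c)).min' hS with hdd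
    have hdmem := (A.filter (fun i => ¬ i < c)).min'_mem hS
    rw [Finset.mem_filter] at hdmem
    refine ⟨d + 1, ?_⟩
    have heq : A.filter (· < d + 1) = insert d (A.filter (· < c)) := by
      ext i
      simp only [Finset.mem_filter, Finset.mem_insert]
      constructor
      · rintro ⟨hiA, hid⟩
        by_cases hic : i < c
        · exact Or.inr ⟨hiA, hic⟩
        · have hdi : d ≤ i := Finset.min'_le _ _ (Finset.mem_filter.mpr ⟨hiA, hic⟩)
          exact Or.inl (by omega)
      · rintro (rfl | ⟨hiA, hic⟩)
        · exact ⟨hdmem.1, Nat.lt_succ_self d⟩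
        · have := hdmem.2
          exact ⟨hiA, by omega⟩
    rw [heq, Finset.card_insert_of_notMem, hc]
    simp only [Finset.mem_filter, not_and]
    exact fun _ h => hdmem.2 h

lemma coeff_proj (e : ℕ → X) (f : ℕ → X →L[ℝ] ℝ)
    (hbio : ∀ k i, f k (e i) = if k = i then 1 else 0)
    (D : Finset ℕ) (x : X) (i : ℕ) :
    f i (proj e f D x) = if i ∈ D then f i x else 0 := by
  have h : f i (proj e f D x) = ∑ j ∈ D, f j x * f i (e j) := by
    unfold proj
    rw [map_sum]
    apply Finset.sum_congr rfl
    intro j _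
    simp
  rw [h]
  simp only [hbio, mul_ite, mul_one, mul_zero]
  exact Finset.sum_ite_eq D i (fun j => f j x)

lemma proj_congr (e : ℕ → X) (f : ℕ → X →L[ℝ] ℝ) (B : Finset ℕ) (x y : X)
    (h : ∀ i ∈ B, f i y = f i x) : proj e f B y = proj e f B x := by
  unfold proj
  exact Finset.sum_congr rfl fun i hi => by rw [h i hi]

lemma proj_proj (e : ℕ → X) (f : ℕ → X →L[ℝ] ℝ)
    (hbio : ∀ k i, f k (e i) = if k = i then 1 else 0)
    (D : Finset ℕ) (x : X) (c : ℕ) :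
    proj e f (Finset.range c) (proj e f D x) = proj e f (D.filter (· < c)) x := by
  have hset : D.filter (· < c) = (Finset.range c).filter (· ∈ D) := by
    ext i
    simp only [Finset.mem_filter, Finset.mem_range]
    exact and_comm
  rw [hset]
  calc proj e f (Finset.range c) (proj e f D x)
      = ∑ i ∈ Finset.range c, (if i ∈ D then f i x • e i else 0) :=
        Finset.sum_congr rfl (fun i _ => by
          show f i (proj e f D x) • e i = _
          rw [coeff_proj e f hbio, ite_smul, zero_smul])
    _ = ∑ i ∈ (Finset.range c).filter (· ∈ D), f i x • e i := (Finset.sum_filter _ _).symm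
    _ = proj e f ((Finset.range c).filter (· ∈ D)) x := rfl

lemma greedy_trunc (e : ℕ → X) (f : ℕ → X →L[ℝ] ℝ)
    (hbio : ∀ k i, f k (e i) = if k = i then 1 else 0)
    (t : ℝ) (x : X) (A : Finset ℕ) (hA : IsGreedySet f t x A) (S : Finset ℕ) :
    IsGreedySet f t (proj e f S x) (A.filter (· ∈ S)) := by
  intro i hi j hj
  rw [coeff_proj e f hbio, coeff_proj e f hbio]
  rcases Finset.mem_filter.mp hi with ⟨hiA, hiS⟩
  rw [if_pos hiS]
  by_cases hjS : j ∈ S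
  · rw [if_pos hjS]
    have hjA : j ∉ A := fun h => hj (Finset.mem_filter.mpr ⟨h, hjS⟩)
    exact hA i hiA j hjA
  · rw [if_neg hjS]
    simpa using abs_nonneg (f i x)

lemma key (e : ℕ → X) (f : ℕ → X →L[ℝ] ℝ)
    (hbio : ∀ k i, f k (e i) = if k = i then 1 else 0)
    (K C t : ℝ) (hK : 0 ≤ K) (hC : 0 ≤ C)
    (hSchauder : ∀ (x : X) (m : ℕ), ‖∑ i ∈ Finset.range m, f i x • e i‖ ≤ K * ‖x‖)
    (nn : ℕ) (hnn : 0 < nn)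
    (hqg' : ∀ (B : Finset ℕ) (y : X), IsGreedySet f t y B → B.card = nn →
      ‖proj e f B y‖ ≤ C * ‖y‖)
    (x : X) (A : Finset ℕ) (hA : IsGreedySet f t x A) (hcard : nn ≤ A.card) :
    ∀ q c, (A.filter (· < c)).card = q →
      ‖proj e f (A.filter (· < c)) x‖ ≤ 2*C*K*((q / nn : ℕ) : ℝ)*‖x‖ + C*K^2*‖x‖ := by
  have hpre : ∀ (z : X) (m : ℕ), ‖proj e f (Finset.range m) z‖ ≤ K * ‖z‖ := hSchauder
  intro q
  induction q using Nat.strong_induction_on with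
  | _ q ih =>
    intro c hc
    by_cases hq : q < nn
    · -- base case: fewer than nn elements below c
      obtain ⟨d, hd⟩ := count_exists A nn hcard
      have hcd : c ≤ d := by
        by_contra h
        push_neg at h
        have hsub : A.filter (· < d) ⊆ A.filter (· < c) := by
          intro i hi
          rw [Finset.mem_filter] at hi ⊢
          exact ⟨hi.1, by omega⟩
        have := Finset.card_le_card hsub
        omega
      set D := A.filter (· < d) with hD
      have hDeq : A.filter (· ∈ Finset.range d) = D := by
        ext i
        simp [Finset.mem_range, hD]
      have hDgreedy : IsGreedySet f t (proj e f (Finset.range d) x) D := by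
        rw [← hDeq]
        exact greedy_trunc e f hbio t x A hA (Finset.range d)
      have hD1 : ‖proj e f D (proj e f (Finset.range d) x)‖ ≤ C * ‖proj e f (Finset.range d) x‖ :=
        hqg' D _ hDgreedy hd
      have hD2 : proj e f D (proj e f (Finset.range d) x) = proj e f D x := by
        apply proj_congr
        intro i hi
        rw [coeff_proj e f hbio]
        rw [Finset.mem_filter] at hi
        rw [if_pos (Finset.mem_range.mpr hi.2)]
      have hDnorm : ‖proj e f D x‖ ≤ C * (K * ‖x‖) := by
        rw [← hD2]
        exact hD1.trans (mul_le_mul_of_nonneg_left (hpre x d) hC)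
      have hL : A.filter (· < c) = D.filter (· < c) := by
        ext i
        simp only [Finset.mem_filter, hD]
        constructor
        · rintro ⟨h1, h2⟩; exact ⟨⟨h1, by omega⟩, h2⟩
        · rintro ⟨⟨h1, _⟩, h2⟩; exact ⟨h1, h2⟩
      have hLnorm : ‖proj e f (A.filter (· < c)) x‖ ≤ K * (C * (K * ‖x‖)) := by
        rw [hL, ← proj_proj e f hbio]
        exact (hpre (proj e f D x) c).trans (mul_le_mul_of_nonneg_left hDnorm hK)
      have hq0 : q / nn = 0 := Nat.div_eq_of_lt hq
      rw [hq0]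
      push_cast
      nlinarith [norm_nonneg x]
    · -- inductive step
      push_neg at hq
      have hqA : q ≤ A.card := hc ▸ Finset.card_le_card (Finset.filter_subset _ _)
      obtain ⟨c'', hc''⟩ := count_exists A (q - nn) (le_trans (Nat.sub_le q nn) hqA)
      have hcc : c'' ≤ c := by
        by_contra h
        push_neg at h
        have hsub : A.filter (· < c) ⊆ A.filter (· < c'') := by
          intro i hi
          rw [Finset.mem_filter] at hi ⊢
          exact ⟨hi.1, by omega⟩
        have := Finset.card_le_card hsub
        omega
      set B := A.filter (fun i => c'' ≤ i ∧ i < c) with hB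
      have hsplit : A.filter (· < c) = A.filter (· < c'') ∪ B := by
        ext i
        simp only [Finset.mem_union, Finset.mem_filter, hB]
        constructor
        · rintro ⟨h1, h2⟩
          rcases lt_or_ge i c'' with h3 | h3
          · exact Or.inl ⟨h1, h3⟩
          · exact Or.inr ⟨h1, h3, h2⟩
        · rintro (⟨h1, h2⟩ | ⟨h1, h2, h3⟩)
          · exact ⟨h1, by omega⟩
          · exact ⟨h1, h3⟩
      have hdisj : Disjoint (A.filter (· < c'')) B := by
        rw [Finset.disjoint_left]
        intro i hi hiB
        rw [Finset.mem_filter] at hi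
        rw [hB, Finset.mem_filter] at hiB
        omega
      have hcardB : B.card = nn := by
        have h := Finset.card_union_of_disjoint hdisj
        rw [← hsplit, hc, hc''] at h
        omega
      have hBeq : A.filter (· ∈ Finset.Ico c'' c) = B := by
        ext i
        simp [Finset.mem_Ico, hB]
      set y := proj e f (Finset.Ico c'' c) x with hy
      have hgB : IsGreedySet f t y B := by
        rw [← hBeq]
        exact greedy_trunc e f hbio t x A hA (Finset.Ico c'' c)
      have h1 : ‖proj e f B y‖ ≤ C * ‖y‖ := hqg' B y hgB hcardB
      have h2 : proj e f B y = proj e f B x := by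
        apply proj_congr
        intro i hi
        rw [hy, coeff_proj e f hbio]
        rw [← hBeq, Finset.mem_filter] at hi
        rw [if_pos hi.2]
      have hIco : proj e f (Finset.range c'') x + proj e f (Finset.Ico c'' c) x
          = proj e f (Finset.range c) x := by
        unfold proj
        rw [Finset.range_eq_Ico, Finset.range_eq_Ico]
        exact Finset.sum_Ico_consecutive (fun i => f i x • e i) (Nat.zero_le c'') hcc
      have hynorm : ‖y‖ ≤ K * ‖x‖ + K * ‖x‖ := by
        have hysub : y = proj e f (Finset.range c) x - proj e f (Finset.range c'') x :=
          eq_sub_of_add_eq' hIco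
        rw [hysub]
        exact (norm_sub_le _ _).trans (add_le_add (hpre x c) (hpre x c''))
      have hBnorm : ‖proj e f B x‖ ≤ C * (K * ‖x‖ + K * ‖x‖) := by
        rw [← h2]
        exact h1.trans (mul_le_mul_of_nonneg_left hynorm hC)
      have hsum : proj e f (A.filter (· < c)) x
          = proj e f (A.filter (· < c'')) x + proj e f B x := by
        rw [hsplit]
        unfold proj
        exact Finset.sum_union hdisj
      have hih := ih (q - nn) (by omega) c'' hc''
      have hdiv : q / nn = (q - nn) / nn + 1 := by
        conv_lhs => rw [show q = (q - nn) + nn from (Nat.sub_add_cancel hq).symm]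
        rw [Nat.add_div_right _ hnn]
      rw [hsum, hdiv]
      calc ‖proj e f (A.filter (· < c'')) x + proj e f B x‖
          ≤ ‖proj e f (A.filter (· < c'')) x‖ + ‖proj e f B x‖ := norm_add_le _ _
        _ ≤ (2*C*K*(((q - nn) / nn : ℕ) : ℝ)*‖x‖ + C*K^2*‖x‖) + C * (K * ‖x‖ + K * ‖x‖) :=
            add_le_add hih hBnorm
        _ ≤ 2*C*K*((((q - nn) / nn + 1 : ℕ)) : ℝ)*‖x‖ + C*K^2*‖x‖ := by
            push_cast
            nlinarith [norm_nonneg x]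

end Aux

/-- If a Schauder basis with basis constant `K` is `C`-`n`-`t`-quasi-greedy,
then for every `k`, every `l ≥ 2` and every `t`-greedy set `A` with
`n_k ≤ |A| < l·n_k` one has `‖P_A(x)‖ ≤ 2CK(l − 1 + K)‖x‖`. -/
theorem stmt_5 {X : Type*} [NormedAddCommGroup X] [NormedSpace ℝ X] [CompleteSpace X]
    (e : ℕ → X) (f : ℕ → X →L[ℝ] ℝ)
    (hdense : Dense (Submodule.span ℝ (Set.range e) : Set X))
    (hbio : ∀ k i, f k (e i) = if k = i then 1 else 0)
    (htotal : ∀ x : X, (∀ i, f i x = 0) → x = 0)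
    (hb1 : BddAbove (Set.range fun i => ‖e i‖))
    (hb2 : BddAbove (Set.range fun i => ‖f i‖))
    (K : ℝ)
    (hSchauder : ∀ (x : X) (m : ℕ), ‖∑ i ∈ Finset.range m, f i x • e i‖ ≤ K * ‖x‖)
    (t : ℝ) (ht0 : 0 < t) (ht1 : t ≤ 1)
    (n : ℕ → ℕ) (hn : StrictMono n) (hnpos : ∀ k, 0 < n k)
    (C : ℝ)
    (hqg : ∀ (x : X) (A : Finset ℕ), IsGreedySet f t x A → (∃ k, A.card = n k) →
      ‖proj e f A x‖ ≤ C * ‖x‖) :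
    ∀ (k : ℕ) (l : ℕ), 2 ≤ l → ∀ (x : X) (A : Finset ℕ), IsGreedySet f t x A →
      n k ≤ A.card → A.card < l * n k →
      ‖proj e f A x‖ ≤ 2 * C * K * ((l : ℝ) - 1 + K) * ‖x‖ := by
  intro k l hl x A hgr hge hlt
  -- `e 0 ≠ 0`
  have he0 : e 0 ≠ 0 := by
    intro h
    have h0 := hbio 0 0
    rw [h] at h0
    simp at h0
  have hne : 0 < ‖e 0‖ := norm_pos_iff.mpr he0
  -- `K ≥ 1`
  have hK1 : 1 ≤ K := by
    have h := hSchauder (e 0) 1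
    simp [hbio] at h
    nlinarith
  -- `C ≥ 1`
  have hC1 : 1 ≤ C := by
    have hgs : IsGreedySet f t (e 0) (Finset.range (n 0)) := by
      intro i hi j hj
      have hj0 : j ≠ 0 := by
        intro hj0
        apply hj
        rw [hj0]
        exact Finset.mem_range.mpr (hnpos 0)
      have : f j (e 0) = 0 := by rw [hbio]; simp [hj0]
      rw [this]
      simpa using abs_nonneg (f i (e 0))
    have h := hqg (e 0) (Finset.range (n 0)) hgs ⟨0, by simp⟩
    have hproj : proj e f (Finset.range (n 0)) (e 0) = e 0 := by
      unfold proj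
      rw [Finset.sum_eq_single_of_mem 0 (Finset.mem_range.mpr (hnpos 0))]
      · simp [hbio]
      · intro i _ hine
        rw [hbio]
        simp [hine]
    rw [hproj] at h
    nlinarith
  have hK0 : 0 ≤ K := by linarith
  have hC0 : 0 ≤ C := by linarith
  -- apply the key lemma with c beyond all of A
  have hfilter : A.filter (· < A.sup id + 1) = A := by
    apply Finset.filter_true_of_mem
    intro i hi
    exact Nat.lt_succ_of_le (Finset.le_sup (f := id) hi)
  have hqg' : ∀ (B : Finset ℕ) (y : X), IsGreedySet f t y B → B.card = n k →
      ‖proj e f B y‖ ≤ C * ‖y‖ := fun B y hB hcB => hqg y B hB ⟨k, hcB⟩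
  have hkey := key e f hbio K C t hK0 hC0 hSchauder (n k) (hnpos k) hqg' x A hgr hge
    A.card (A.sup id + 1) (by rw [hfilter])
  rw [hfilter] at hkey
  have hdivlt : A.card / n k < l := (Nat.div_lt_iff_lt_mul (hnpos k)).mpr hlt
  have hcast : ((A.card / n k : ℕ) : ℝ) ≤ (l : ℝ) - 1 := by
    have h1 : A.card / n k + 1 ≤ l := hdivlt
    have h2 : ((A.card / n k + 1 : ℕ) : ℝ) ≤ (l : ℕ) := by exact_mod_cast h1
    push_cast at h2
    linarith
  have hfin : 2*C*K*((A.card / n k : ℕ) : ℝ)*‖x‖ + C*K^2*‖x‖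
      ≤ 2 * C * K * ((l : ℝ) - 1 + K) * ‖x‖ := by
    nlinarith [norm_nonneg x, mul_nonneg (mul_nonneg hC0 hK0) (norm_nonneg x),
      mul_nonneg (mul_nonneg (mul_nonneg hC0 hK0) hK0) (norm_nonneg x)]
  exact hkey.trans hfin
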